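/- Let β > 1. If the cylinder I_n(ω) associated to the admissible word ω = (ω_1,…,ω_n) is full, then for every admissible word ω' = (ω'_1,…,ω'_m), |I_{n+m}(ω * ω')| = β^{-n}·|I_m(ω')|. -/
import Mathlib


open Filter MeasureTheory Set

noncomputable def betaT (β : ℝ) (x : ℝ) : ℝ := β * x - ⌊β * x⌋

noncomputable def eps (β x : ℝ) (n : ℕ) : ℤ := ⌊β * (betaT β)^[n - 1] x⌋

noncomputable def runLen (β x : ℝ) (n : ℕ) : ℕ :=
  sSup {j | ∃ i, i + j ≤ n ∧ ∀ k < j, eps β x (i + k + 1) = 0}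

def isAdmissible (β : ℝ) (n : ℕ) (ω : ℕ → ℤ) : Prop :=
  ∃ x ∈ Set.Ico (0 : ℝ) 1, ∀ k < n, eps β x (k + 1) = ω k

def cylinder (β : ℝ) (n : ℕ) (ω : ℕ → ℤ) : Set ℝ :=
  {x | x ∈ Set.Ico (0 : ℝ) 1 ∧ ∀ k < n, eps β x (k + 1) = ω k}

def isFull (β : ℝ) (n : ℕ) (ω : ℕ → ℤ) : Prop :=
  MeasureTheory.volume (cylinder β n ω) = ENNReal.ofReal (β ^ (-(n : ℤ)))

open Classical in
noncomputable def epsStar (β : ℝ) : ℕ → ℤ :=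
  if h : ∃ m, 1 ≤ m ∧ eps β 1 m ≠ 0 ∧ ∀ k, m < k → eps β 1 k = 0 then
    fun n =>
      if (n - 1) % Nat.find h + 1 = Nat.find h then eps β 1 (Nat.find h) - 1
      else eps β 1 ((n - 1) % Nat.find h + 1)
  else eps β 1

def lexLt (u v : ℕ → ℤ) : Prop := ∃ j, (∀ k < j, u k = v k) ∧ u j < v j

def lexLe (u v : ℕ → ℤ) : Prop := lexLt u v ∨ u = v

noncomputable def vbeta (β x : ℝ) : ℝ :=
  sSup {v | 0 ≤ v ∧ ∃ᶠ n : ℕ in atTop, (betaT β)^[n] x ≤ β ^ (-((n : ℝ) * v))}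

noncomputable def hatv (β x : ℝ) : ℝ :=
  sSup {v | 0 ≤ v ∧ ∀ᶠ N : ℕ in atTop, ∃ n, 1 ≤ n ∧ n ≤ N ∧ (betaT β)^[n] x ≤ β ^ (-(v * (N : ℝ)))}


/-- Auxiliary: value `Σ_{k<n} ω_k β^{n-1-k}`, defined recursively. -/
noncomputable def cval (β : ℝ) (ω : ℕ → ℤ) : ℕ → ℝ
  | 0 => 0
  | k + 1 => β * cval β ω k + ω k

lemma betaT_mem (β x : ℝ) : betaT β x ∈ Set.Ico (0 : ℝ) 1 := by
  unfold betaT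
  constructor
  · linarith [Int.floor_le (β * x)]
  · linarith [Int.lt_floor_add_one (β * x)]

lemma betaT_iter_mem (β x : ℝ) (hx : x ∈ Set.Ico (0 : ℝ) 1) (n : ℕ) :
    (betaT β)^[n] x ∈ Set.Ico (0 : ℝ) 1 := by
  induction n with
  | zero => exact hx
  | succ k _ => rw [Function.iterate_succ_apply']; exact betaT_mem β _

lemma eps_shift (β x : ℝ) (n k : ℕ) :
    eps β x (n + k + 1) = eps β ((betaT β)^[n] x) (k + 1) := by
  simp only [eps, Nat.add_sub_cancel]
  rw [show n + k = k + n from Nat.add_comm n k, Function.iterate_add_apply]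

lemma iter_eq_affine (β : ℝ) (ω : ℕ → ℤ) (n : ℕ) (x : ℝ)
    (h : ∀ k < n, eps β x (k + 1) = ω k) :
    (betaT β)^[n] x = β ^ n * x - cval β ω n := by
  induction n with
  | zero => simp [cval]
  | succ k ih =>
    have hk : (betaT β)^[k] x = β ^ k * x - cval β ω k :=
      ih (fun j hj => h j (by omega))
    have he : (⌊β * (betaT β)^[k] x⌋ : ℤ) = ω k := by
      have := h k (by omega)
      simpa [eps] using this
    rw [Function.iterate_succ_apply', betaT, he, hk, cval]
    ring

lemma measurable_betaT (β : ℝ) : Measurable (betaT β) := by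
  unfold betaT
  exact (measurable_id.const_mul β).sub
    ((measurable_from_top (f := (Int.cast : ℤ → ℝ))).comp (measurable_id.const_mul β).floor)

lemma measurable_eps (β : ℝ) (k : ℕ) : Measurable fun x => eps β x (k + 1) := by
  unfold eps
  simp only [Nat.add_sub_cancel]
  exact Int.measurable_floor.comp (((measurable_betaT β).iterate k).const_mul β)

lemma measurableSet_cylinder (β : ℝ) (n : ℕ) (ω : ℕ → ℤ) :
    MeasurableSet (cylinder β n ω) := by
  have : cylinder β n ω =
      Set.Ico 0 1 ∩ ⋂ k ∈ Set.Iio n, {x | eps β x (k + 1) = ω k} := by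
    ext x
    simp [_root_.cylinder, Set.mem_iInter]
  rw [this]
  refine measurableSet_Ico.inter (MeasurableSet.biInter (Set.to_countable _) fun k _ => ?_)
  exact (measurable_eps β k) (measurableSet_singleton (ω k))

set_option maxHeartbeats 1000000 in
theorem stmt14 (β : ℝ) (hβ : 1 < β) (n m : ℕ) (ω ω' : ℕ → ℤ)
    (hadm : isAdmissible β n ω) (hfull : isFull β n ω) (hadm' : isAdmissible β m ω') :
    MeasureTheory.volume (cylinder β (n + m) (fun k => if k < n then ω k else ω' (k - n))) =
      ENNReal.ofReal (β ^ (-(n : ℤ))) * MeasureTheory.volume (cylinder β m ω') := by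
  have hβ0 : (0 : ℝ) < β := lt_trans one_pos hβ
  have hβn : (0 : ℝ) < β ^ n := pow_pos hβ0 n
  set c := cval β ω n with hc
  set f : ℝ → ℝ := fun x => β ^ n * x - c with hf
  -- scaling of volume under f
  have hscale : ∀ s : Set ℝ,
      volume (f ⁻¹' s) = ENNReal.ofReal (β ^ (-(n : ℤ))) * volume s := by
    intro s
    have hps : f ⁻¹' s = (fun x => β ^ n * x) ⁻¹' ((fun y => y + (-c)) ⁻¹' s) := by
      ext x
      simp [hf, sub_eq_add_neg]
    rw [hps, Real.volume_preimage_mul_left (ne_of_gt hβn), measure_preimage_add_right]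
    congr 1
    rw [abs_of_pos (inv_pos.mpr hβn), zpow_neg, zpow_natCast]
  -- on the cylinder, T^[n] agrees with f
  have hfx : ∀ x ∈ cylinder β n ω, (betaT β)^[n] x = f x := fun x hx =>
    iter_eq_affine β ω n x hx.2
  -- concatenated cylinder as intersection
  have hconcat : cylinder β (n + m) (fun k => if k < n then ω k else ω' (k - n)) =
      cylinder β n ω ∩ f ⁻¹' (cylinder β m ω') := by
    ext x
    constructor
    · rintro ⟨hx1, hx2⟩
      have hA : x ∈ cylinder β n ω := by
        refine ⟨hx1, fun k hk => ?_⟩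
        have := hx2 k (by omega)
        simpa [if_pos hk] using this
      refine ⟨hA, ?_⟩
      have hT := hfx x hA
      refine ⟨hT ▸ betaT_iter_mem β x hx1 n, fun k hk => ?_⟩
      have h1 : eps β x (n + k + 1) = ω' k := by
        have := hx2 (n + k) (by omega)
        simpa [show ¬ n + k < n by omega, Nat.add_sub_cancel_left] using this
      rw [← hT, ← eps_shift β x n k]
      exact h1
    · rintro ⟨hA, hC⟩
      have hT := hfx x hA
      refine ⟨hA.1, fun k hk => ?_⟩
      by_cases hkn : k < n
      · simpa [if_pos hkn] using hA.2 k hkn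
      · have hkj : k = n + (k - n) := by omega
        have h1 : eps β x (n + (k - n) + 1) = ω' (k - n) := by
          rw [eps_shift β x n (k - n), hT]
          exact hC.2 (k - n) (by omega)
        show eps β x (k + 1) = if k < n then ω k else ω' (k - n)
        rw [if_neg hkn, hkj, Nat.add_sub_cancel_left]
        exact h1
  -- cylinder β n ω sits inside f ⁻¹' (Ico 0 1), with the same volume
  have hsub : cylinder β n ω ⊆ f ⁻¹' (Set.Ico (0 : ℝ) 1) := by
    intro x hx
    have := betaT_iter_mem β x hx.1 n
    rwa [hfx x hx] at this
  have hJ : volume (f ⁻¹' (Set.Ico (0 : ℝ) 1)) = ENNReal.ofReal (β ^ (-(n : ℤ))) := by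
    rw [hscale]
    simp [Real.volume_Ico]
  have hnull : volume (f ⁻¹' (Set.Ico (0 : ℝ) 1) \ cylinder β n ω) = 0 := by
    rw [measure_diff hsub (measurableSet_cylinder β n ω).nullMeasurableSet
      (by rw [hfull]; exact ENNReal.ofReal_ne_top), hJ, hfull, tsub_self]
  -- the intersection has full measure inside f ⁻¹' (cylinder β m ω')
  have key : volume (cylinder β n ω ∩ f ⁻¹' (cylinder β m ω')) =
      volume (f ⁻¹' (cylinder β m ω')) := by
    refine le_antisymm (measure_mono Set.inter_subset_right) ?_
    calc volume (f ⁻¹' (cylinder β m ω'))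
        ≤ volume ((cylinder β n ω ∩ f ⁻¹' (cylinder β m ω')) ∪
            (f ⁻¹' (Set.Ico (0 : ℝ) 1) \ cylinder β n ω)) := by
          refine measure_mono fun x hx => ?_
          by_cases hxA : x ∈ cylinder β n ω
          · exact Or.inl ⟨hxA, hx⟩
          · exact Or.inr ⟨Set.preimage_mono (fun y hy => hy.1) hx, hxA⟩
      _ ≤ volume (cylinder β n ω ∩ f ⁻¹' (cylinder β m ω')) +
            volume (f ⁻¹' (Set.Ico (0 : ℝ) 1) \ cylinder β n ω) := measure_union_le _ _
      _ = volume (cylinder β n ω ∩ f ⁻¹' (cylinder β m ω')) := by rw [hnull, add_zero]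
  rw [hconcat, key, hscale]
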